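/- arXiv:2408.10895 — 3 statements merged into one kernel-verified Lean document; each statement's English description precedes it below -/
import Mathlib

section
/- Suppose Condition (2) holds: ∑_{i=1}^∞ w̃_i = ∞ and ∑_{i=1}^∞ w̃_i² < ∞. Then the historical collective opinion converges to the ground-truth collective opinion almost surely: P[ lim_{i→∞} β_i = α ] = 1. -/
open MeasureTheory Filter

/-- Cumulative weight `∑_{j=1}^i w_j`. -/
noncomputable def Sw (w : ℕ → ℝ) (i : ℕ) : ℝ := ∑ j ∈ Finset.Icc 1 i, w j

/-- Normalized weight `w̃_i = w_i / ∑_{j=1}^i w_j`. -/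
noncomputable def wnorm (w : ℕ → ℝ) (i : ℕ) : ℝ := w i / Sw w i

/-- Historical collective opinion
`β_{i,m} = (∑_{j=1}^i w_j 1{R_j = m}) / (∑_{j=1}^i w_j)`. -/
noncomputable def betaH {Ω : Type*} (w : ℕ → ℝ) (R : ℕ → Ω → ℕ) (i m : ℕ) (ω : Ω) : ℝ :=
  (∑ j ∈ Finset.Icc 1 i, w j * (if R j ω = m then (1 : ℝ) else 0)) / Sw w i

/-- `𝓗_i`: the σ-algebra generated by `R_1, …, R_i` (trivial for `i = 0`). -/
def Hsig {Ω : Type*} (R : ℕ → Ω → ℕ) (i : ℕ) : MeasurableSpace Ω :=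
  ⨆ j ∈ Finset.Icc 1 i, MeasurableSpace.comap (R j) ⊤

set_option maxHeartbeats 2000000

lemma Hsig_le {Ω : Type*} [m0 : MeasurableSpace Ω] (R : ℕ → Ω → ℕ)
    (hRmeas : ∀ j, Measurable (R j)) (i : ℕ) : Hsig R i ≤ m0 := by
  refine iSup₂_le fun j _ => ?_
  intro s hs
  obtain ⟨s', _, rfl⟩ := hs
  exact hRmeas j (s'.to_countable.measurableSet)

lemma measurable_R_Hsig {Ω : Type*} (R : ℕ → Ω → ℕ) {i j : ℕ} (hj : j ∈ Finset.Icc 1 i) :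
    Measurable[Hsig R i] (R j) := by
  intro s _
  have h1 : MeasurableSet[MeasurableSpace.comap (R j) ⊤] (R j ⁻¹' s) := ⟨s, trivial, rfl⟩
  exact le_biSup (fun j => MeasurableSpace.comap (R j) ⊤) hj _ h1

lemma betaH_measurable {Ω : Type*} {mm : MeasurableSpace Ω} (w : ℕ → ℝ) (R : ℕ → Ω → ℕ)
    (i m : ℕ) (hR : ∀ j ∈ Finset.Icc 1 i, Measurable[mm] (R j)) :
    Measurable[mm] (betaH w R i m) := by
  unfold betaH
  apply Measurable.div_const
  apply Finset.measurable_sum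
  intro j hj
  exact Measurable.const_mul
    (Measurable.ite (hR j hj (measurableSet_singleton m)) measurable_const measurable_const) _

lemma integrable_of_bdd {Ω : Type*} [MeasurableSpace Ω] {μ : Measure Ω} [IsFiniteMeasure μ]
    {f : Ω → ℝ} (hf : Measurable f) (C : ℝ) (h : ∀ ω, |f ω| ≤ C) : Integrable f μ :=
  (integrable_const C).mono' hf.aestronglyMeasurable
    (Eventually.of_forall fun ω => by simpa using h ω)

lemma simplex_dist_sq_le_two (s : Finset ℕ) (p q : ℕ → ℝ)
    (hp0 : ∀ m ∈ s, 0 ≤ p m) (hps : ∑ m ∈ s, p m = 1)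
    (hq0 : ∀ m ∈ s, 0 ≤ q m) (hqs : ∑ m ∈ s, q m = 1) :
    ∑ m ∈ s, (p m - q m) ^ 2 ≤ 2 := by
  have hp1 : ∀ m ∈ s, p m ≤ 1 := fun m hm => by
    have := Finset.single_le_sum hp0 hm; rw [hps] at this; exact this
  have hq1 : ∀ m ∈ s, q m ≤ 1 := fun m hm => by
    have := Finset.single_le_sum hq0 hm; rw [hqs] at this; exact this
  have key : ∀ m ∈ s, (p m - q m) ^ 2 ≤ p m + q m := fun m hm => by
    nlinarith [hp0 m hm, hp1 m hm, hq0 m hm, hq1 m hm]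
  calc ∑ m ∈ s, (p m - q m) ^ 2 ≤ ∑ m ∈ s, (p m + q m) := Finset.sum_le_sum key
    _ = 2 := by rw [Finset.sum_add_distrib, hps, hqs]; norm_num

lemma integral_mul_indicator {Ω : Type*} [m0 : MeasurableSpace Ω] (μ : Measure Ω)
    [IsProbabilityMeasure μ] (R : ℕ → Ω → ℕ) (hRmeas : ∀ j, Measurable (R j)) (i m : ℕ)
    (f : Ω → ℝ) (hfH : Measurable[Hsig R i] f) (hfb : ∀ ω, |f ω| ≤ 1)
    (h : Ω → ℝ)
    (hmod : μ[(fun ω => if R (i + 1) ω = m then (1 : ℝ) else 0) | Hsig R i] =ᵐ[μ] h) :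
    ∫ ω, f ω * (if R (i + 1) ω = m then (1 : ℝ) else 0) ∂μ = ∫ ω, f ω * h ω ∂μ := by
  have hle := Hsig_le R hRmeas i
  have hfm : Measurable f := hfH.mono hle le_rfl
  have hg : Measurable (fun ω => if R (i + 1) ω = m then (1 : ℝ) else 0) :=
    Measurable.ite (hRmeas (i + 1) (measurableSet_singleton m)) measurable_const measurable_const
  have hgi : Integrable (fun ω => if R (i + 1) ω = m then (1 : ℝ) else 0) μ :=
    integrable_of_bdd hg 1 (fun ω => by split <;> simp)
  have hfgi : Integrable (f * fun ω => if R (i + 1) ω = m then (1 : ℝ) else 0) μ := by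
    refine integrable_of_bdd (hfm.mul hg) 1 (fun ω => ?_)
    rw [Pi.mul_apply, abs_mul]
    calc |f ω| * |if R (i + 1) ω = m then (1:ℝ) else 0| ≤ 1 * 1 := by
          refine mul_le_mul (hfb ω) ?_ (abs_nonneg _) zero_le_one
          split <;> simp
      _ = 1 := by norm_num
  have e2 := condExp_stronglyMeasurable_mul_of_bound hle hfH.stronglyMeasurable hgi 1
    (Eventually.of_forall fun ω => by simpa using hfb ω)
  calc ∫ ω, f ω * (if R (i + 1) ω = m then (1 : ℝ) else 0) ∂μ
      = ∫ ω, (f * fun ω => if R (i + 1) ω = m then (1 : ℝ) else 0) ω ∂μ := rfl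
    _ = ∫ ω, (μ[(f * fun ω => if R (i + 1) ω = m then (1 : ℝ) else 0) | Hsig R i]) ω ∂μ :=
        (integral_condExp hle).symm
    _ = ∫ ω, (f * μ[(fun ω => if R (i + 1) ω = m then (1 : ℝ) else 0) | Hsig R i]) ω ∂μ :=
        integral_congr_ae e2
    _ = ∫ ω, f ω * h ω ∂μ := by
        refine integral_congr_ae ?_
        filter_upwards [hmod] with ω hω
        simp only [Pi.mul_apply, hω]


lemma sqrt_sum_sq_add_le (s : Finset ℕ) (f g : ℕ → ℝ) :
    Real.sqrt (∑ i ∈ s, (f i + g i) ^ 2)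
      ≤ Real.sqrt (∑ i ∈ s, f i ^ 2) + Real.sqrt (∑ i ∈ s, g i ^ 2) := by
  set A := Real.sqrt (∑ i ∈ s, f i ^ 2) with hA
  set B := Real.sqrt (∑ i ∈ s, g i ^ 2) with hB
  have hA0 : 0 ≤ A := Real.sqrt_nonneg _
  have hB0 : 0 ≤ B := Real.sqrt_nonneg _
  have hAsq : A ^ 2 = ∑ i ∈ s, f i ^ 2 :=
    Real.sq_sqrt (Finset.sum_nonneg fun i _ => sq_nonneg _)
  have hBsq : B ^ 2 = ∑ i ∈ s, g i ^ 2 :=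
    Real.sq_sqrt (Finset.sum_nonneg fun i _ => sq_nonneg _)
  have hcs : ∑ i ∈ s, f i * g i ≤ A * B := Real.sum_mul_le_sqrt_mul_sqrt s f g
  have hexp : ∑ i ∈ s, (f i + g i) ^ 2
      = (∑ i ∈ s, f i ^ 2) + 2 * (∑ i ∈ s, f i * g i) + ∑ i ∈ s, g i ^ 2 := by
    rw [Finset.sum_congr rfl (fun i (_ : i ∈ s) =>
      (by ring : (f i + g i) ^ 2 = f i ^ 2 + 2 * (f i * g i) + g i ^ 2)),
      Finset.sum_add_distrib, Finset.sum_add_distrib, ← Finset.mul_sum]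
  have h1 : ∑ i ∈ s, (f i + g i) ^ 2 ≤ (A + B) ^ 2 := by
    rw [hexp]; nlinarith [hcs]
  calc Real.sqrt (∑ i ∈ s, (f i + g i) ^ 2) ≤ Real.sqrt ((A + B) ^ 2) :=
        Real.sqrt_le_sqrt h1
    _ = A + B := Real.sqrt_sq (by positivity)

lemma pathwise {c : ℝ} (hc : 0 < c) (U a : ℕ → ℝ) (hU : ∀ i, 0 ≤ U i) (ha : ∀ i, 0 ≤ a i)
    (hstep : ∀ i, U (i + 1) ≤ U i + c * a i)
    (hsum : Summable (fun i => a i * U i ^ 2))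
    (hdiv : ¬ Summable a)
    (ha0 : Tendsto a atTop (nhds 0)) :
    Tendsto U atTop (nhds 0) := by
  have key : ∀ ε : ℝ, 0 < ε → ∀ᶠ N in atTop, U N < 2 * ε := by
    intro ε hε
    by_contra hcon
    rw [not_eventually] at hcon
    have hcon' : ∀ K : ℕ, ∃ N, K ≤ N ∧ 2 * ε ≤ U N := by
      intro K
      obtain ⟨N, hN1, hN2⟩ := (frequently_atTop.1 hcon) K
      exact ⟨N, hN1, not_lt.1 hN2⟩
    -- infinitely many small values
    have hsmall : ∀ K : ℕ, ∃ i, K ≤ i ∧ U i < ε := by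
      by_contra h
      push_neg at h
      obtain ⟨K, hK⟩ := h
      apply hdiv
      rw [← summable_nat_add_iff K]
      have h1 : Summable (fun i => a (i + K) * U (i + K) ^ 2) :=
        (summable_nat_add_iff K).2 hsum
      refine Summable.of_nonneg_of_le (fun i => ha _) (fun i => ?_) (h1.mul_left (ε ^ 2)⁻¹)
      have hUi : ε ≤ U (i + K) := hK _ (Nat.le_add_left _ _)
      have h2 : ε ^ 2 ≤ U (i + K) ^ 2 := by nlinarith
      have h3 : a (i + K) * ε ^ 2 ≤ a (i + K) * U (i + K) ^ 2 :=
        mul_le_mul_of_nonneg_left h2 (ha _)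
      have h4 : (0:ℝ) < ε ^ 2 := by positivity
      calc a (i + K) = (ε ^ 2)⁻¹ * (a (i + K) * ε ^ 2) := by field_simp
        _ ≤ (ε ^ 2)⁻¹ * (a (i + K) * U (i + K) ^ 2) :=
            mul_le_mul_of_nonneg_left h3 (inv_nonneg.2 (le_of_lt h4))
    -- vanishing for hsum
    set δ : ℝ := ε ^ 3 / (4 * c) with hδ
    have hδ0 : 0 < δ := by positivity
    obtain ⟨s, hs⟩ := summable_iff_vanishing.1 hsum (Set.Ioo (-δ) δ)
      (Ioo_mem_nhds (by linarith) hδ0)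
    set T₁ : ℕ := s.sup id + 1 with hT₁
    have hT₁s : ∀ i ∈ s, i < T₁ := fun i hi => Nat.lt_succ_of_le (Finset.le_sup (f := id) hi)
    obtain ⟨T₂, hT₂⟩ := (Metric.tendsto_atTop.1 ha0) (ε / (2 * c)) (by positivity)
    have hT₂' : ∀ i, T₂ ≤ i → c * a i < ε / 2 := by
      intro i hi
      have := hT₂ i hi
      rw [Real.dist_eq, sub_zero, abs_of_nonneg (ha i)] at this
      rw [lt_div_iff₀ (by positivity : (0:ℝ) < 2 * c)] at this
      calc c * a i = a i * c := mul_comm _ _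
        _ < ε / 2 := by nlinarith
    set T : ℕ := max T₁ T₂ with hT
    obtain ⟨n₀, hn₀T, hn₀⟩ := hsmall T
    obtain ⟨N, hNn₀, hN⟩ := hcon' (n₀ + 1)
    -- last small index before N
    set S : Finset ℕ := (Finset.Ico n₀ N).filter (fun i => U i < ε) with hS
    have hn₀S : n₀ ∈ S := by
      simp only [hS, Finset.mem_filter, Finset.mem_Ico]
      exact ⟨⟨le_refl _, by omega⟩, hn₀⟩
    have hSne : S.Nonempty := ⟨n₀, hn₀S⟩
    set n : ℕ := S.max' hSne with hn
    have hnS : n ∈ S := S.max'_mem hSne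
    have hnIco : n₀ ≤ n ∧ n < N := by
      have := hnS; simp only [hS, Finset.mem_filter, Finset.mem_Ico] at this; exact ⟨this.1.1, this.1.2⟩
    have hUn : U n < ε := by
      have := hnS; simp only [hS, Finset.mem_filter] at this; exact this.2
    have hbig : ∀ i, n < i → i < N → ε ≤ U i := by
      intro i hni hiN
      by_contra h
      push_neg at h
      have hiS : i ∈ S := by
        simp only [hS, Finset.mem_filter, Finset.mem_Ico]
        exact ⟨⟨le_trans hnIco.1 (le_of_lt hni), hiN⟩, h⟩
      exact absurd (S.le_max' i hiS) (by omega)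
    -- chain inequality
    have hchain : ∀ m : ℕ, U (n + m) ≤ U n + c * ∑ i ∈ Finset.Ico n (n + m), a i := by
      intro m
      induction m with
      | zero => simp
      | succ m ih =>
        have := hstep (n + m)
        have hsum' : ∑ i ∈ Finset.Ico n (n + (m+1)), a i
            = (∑ i ∈ Finset.Ico n (n + m), a i) + a (n + m) := by
          rw [show n + (m + 1) = (n + m) + 1 by ring,
            Finset.sum_Ico_succ_top (Nat.le_add_right _ _)]
        rw [show n + (m + 1) = (n + m) + 1 by ring]
        calc U ((n + m) + 1) ≤ U (n + m) + c * a (n + m) := hstep (n + m)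
          _ ≤ U n + c * ∑ i ∈ Finset.Ico n (n + m), a i + c * a (n + m) := by linarith
          _ = U n + c * ∑ i ∈ Finset.Ico n (n + (m+1)), a i := by rw [hsum']; ring
    have hUN : U N ≤ U n + c * ∑ i ∈ Finset.Ico n N, a i := by
      have := hchain (N - n)
      rwa [Nat.add_sub_cancel' (le_of_lt hnIco.2)] at this
    -- split the sum
    have hsplit : ∑ i ∈ Finset.Ico n N, a i = a n + ∑ i ∈ Finset.Ico (n + 1) N, a i := by
      rw [← Finset.sum_Ico_consecutive _ (Nat.le_succ n) (by omega)]
      simp [Finset.sum_Ico_succ_top]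
    -- bound the tail sum
    have htail : ∑ i ∈ Finset.Ico (n + 1) N, a i ≤ (ε ^ 2)⁻¹ * δ := by
      have hd : Disjoint (Finset.Ico (n + 1) N) s := by
        rw [Finset.disjoint_left]
        intro i hi his
        rw [Finset.mem_Ico] at hi
        have h1 := hT₁s i his
        have h2 : T₁ ≤ T := le_max_left _ _
        omega
      have hmem := hs _ hd
      have hsum_lt : ∑ i ∈ Finset.Ico (n + 1) N, a i * U i ^ 2 < δ := hmem.2
      have hle : ∑ i ∈ Finset.Ico (n + 1) N, a i
          ≤ (ε ^ 2)⁻¹ * ∑ i ∈ Finset.Ico (n + 1) N, a i * U i ^ 2 := by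
        rw [Finset.mul_sum]
        refine Finset.sum_le_sum fun i hi => ?_
        rw [Finset.mem_Ico] at hi
        have hUi : ε ≤ U i := hbig i hi.1 hi.2
        have h1 : ε ^ 2 ≤ U i ^ 2 := by nlinarith
        have h3 : a i * ε ^ 2 ≤ a i * U i ^ 2 := mul_le_mul_of_nonneg_left h1 (ha _)
        have h4 : (0:ℝ) < ε ^ 2 := by positivity
        calc a i = (ε ^ 2)⁻¹ * (a i * ε ^ 2) := by field_simp
          _ ≤ (ε ^ 2)⁻¹ * (a i * U i ^ 2) :=
              mul_le_mul_of_nonneg_left h3 (inv_nonneg.2 (le_of_lt h4))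
      calc ∑ i ∈ Finset.Ico (n + 1) N, a i
          ≤ (ε ^ 2)⁻¹ * ∑ i ∈ Finset.Ico (n + 1) N, a i * U i ^ 2 := hle
        _ ≤ (ε ^ 2)⁻¹ * δ := by
            have : (0:ℝ) ≤ (ε ^ 2)⁻¹ := by positivity
            nlinarith
    have hcan : c * a n < ε / 2 := hT₂' n (le_trans (le_max_right T₁ T₂) (le_trans hn₀T hnIco.1))
    have hfinal : U N < 2 * ε := by
      have h1 : c * ((ε ^ 2)⁻¹ * δ) = ε / 4 := by
        rw [hδ]; field_simp
      calc U N ≤ U n + c * ∑ i ∈ Finset.Ico n N, a i := hUN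
        _ = U n + c * a n + c * ∑ i ∈ Finset.Ico (n + 1) N, a i := by rw [hsplit]; ring
        _ ≤ U n + c * a n + c * ((ε ^ 2)⁻¹ * δ) := by
            have := mul_le_mul_of_nonneg_left htail (le_of_lt hc); linarith
        _ < ε + ε / 2 + ε / 4 := by rw [h1]; linarith
        _ < 2 * ε := by linarith
    linarith [hN, hfinal]
  rw [Metric.tendsto_atTop]
  intro ε hε
  obtain ⟨N, hN⟩ := (eventually_atTop.1 (key (ε / 4) (by linarith)))
  exact ⟨N, fun n hn => by
    rw [Real.dist_eq, sub_zero, abs_of_nonneg (hU n)]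
    linarith [hN n hn]⟩

lemma Sw_succ (w : ℕ → ℝ) (i : ℕ) : Sw w (i + 1) = Sw w i + w (i + 1) :=
  Finset.sum_Icc_succ_top (by omega) _

lemma Sw_pos {w : ℕ → ℝ} (hw : ∀ j, 0 ≤ w j) (hw1 : 0 < w 1) {i : ℕ} (hi : 1 ≤ i) :
    0 < Sw w i :=
  Finset.sum_pos' (fun j _ => hw j) ⟨1, Finset.mem_Icc.2 ⟨le_refl _, hi⟩, hw1⟩

lemma wnorm_nonneg {w : ℕ → ℝ} (hw : ∀ j, 0 ≤ w j) (hw1 : 0 < w 1) (i : ℕ) :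
    0 ≤ wnorm w i := by
  unfold wnorm
  rcases Nat.eq_zero_or_pos i with h | h
  · subst h; simp [Sw]
  · exact div_nonneg (hw i) (le_of_lt (Sw_pos hw hw1 h))

lemma wnorm_le_one {w : ℕ → ℝ} (hw : ∀ j, 0 ≤ w j) (hw1 : 0 < w 1) {i : ℕ} (hi : 1 ≤ i) :
    wnorm w i ≤ 1 := by
  unfold wnorm
  rw [div_le_one (Sw_pos hw hw1 hi)]
  exact Finset.single_le_sum (fun j _ => hw j) (Finset.mem_Icc.2 ⟨hi, le_refl _⟩)

lemma sum_Icc_one_eq_range (f : ℕ → ℝ) (n : ℕ) :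
    ∑ i ∈ Finset.Icc 1 n, f i = ∑ i ∈ Finset.range n, f (i + 1) := by
  induction n with
  | zero => simp
  | succ n ih => rw [Finset.sum_Icc_succ_top (by omega), ih, Finset.sum_range_succ]

lemma betaH_succ {Ω : Type*} {w : ℕ → ℝ} (hw : ∀ j, 0 ≤ w j) (hw1 : 0 < w 1)
    (R : ℕ → Ω → ℕ) (i m : ℕ) (ω : Ω) :
    betaH w R (i + 1) m ω = (1 - wnorm w (i + 1)) * betaH w R i m ω
      + wnorm w (i + 1) * (if R (i + 1) ω = m then (1 : ℝ) else 0) := by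
  have hS' : 0 < Sw w (i + 1) := Sw_pos hw hw1 (by omega)
  have hrec : Sw w (i + 1) = Sw w i + w (i + 1) := Sw_succ w i
  have hnum : (∑ j ∈ Finset.Icc 1 (i + 1), w j * (if R j ω = m then (1 : ℝ) else 0))
      = (∑ j ∈ Finset.Icc 1 i, w j * (if R j ω = m then (1 : ℝ) else 0))
        + w (i + 1) * (if R (i + 1) ω = m then (1 : ℝ) else 0) :=
    Finset.sum_Icc_succ_top (by omega) _
  have h1 : 1 - w (i + 1) / Sw w (i + 1) = Sw w i / Sw w (i + 1) := by
    field_simp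
    linarith [hrec]
  set x : ℝ := (if R (i + 1) ω = m then (1 : ℝ) else 0) with hx
  set A : ℝ := ∑ j ∈ Finset.Icc 1 i, w j * (if R j ω = m then (1 : ℝ) else 0) with hA
  rcases Nat.eq_zero_or_pos i with h0 | hpos
  · subst h0
    have hSw0 : Sw w 0 = 0 := by simp [Sw]
    have hA0 : A = 0 := by simp [hA]
    have hS1 : Sw w (0 + 1) = w 1 := by rw [hrec, hSw0]; ring_nf
    unfold betaH wnorm
    rw [hnum, ← hA, hA0, hS1, hSw0]
    rw [div_self (ne_of_gt hw1)]
    field_simp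
    simp
  · have hS : 0 < Sw w i := Sw_pos hw hw1 hpos
    unfold betaH wnorm
    rw [hnum, ← hA, h1]
    field_simp
/-- Under the herding model, if `∑ w̃_i = ∞` and `∑ w̃_i² < ∞`,
then the historical collective opinion `β_i` converges to the ground-truth
collective opinion `α` almost surely. -/
theorem stmt_1
    {Ω : Type*} [MeasurableSpace Ω] (μ : Measure Ω) [IsProbabilityMeasure μ]
    (M : ℕ) (hM : 1 ≤ M)
    (α : ℕ → ℝ) (hα : ∀ m ∈ Finset.Icc 1 M, α m ∈ Set.Icc (0 : ℝ) 1)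
    (hα1 : ∑ m ∈ Finset.Icc 1 M, α m = 1)
    (R : ℕ → Ω → ℕ) (hRrange : ∀ i, 1 ≤ i → ∀ ω, R i ω ∈ Finset.Icc 1 M)
    (hRmeas : ∀ i, Measurable (R i))
    (w : ℕ → ℝ) (hw : ∀ j, 0 ≤ w j) (hw1 : 0 < w 1)
    (γ : ℕ → ℝ) (hγ : ∀ i, γ i ∈ Set.Icc (0 : ℝ) 1)
    (hγsup : ∃ g, g < 1 ∧ ∀ i, γ i ≤ g)
    (θ : ℕ → ℕ → Ω → ℝ)
    (hθmeas : ∀ i m, Measurable[Hsig R i] (θ i m))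
    (hθ0 : ∀ m ω, θ 0 m ω = α m)
    (hθrange : ∀ i m ω, θ i m ω ∈ Set.Icc (0 : ℝ) 1)
    (hθsum : ∀ i ω, ∑ m ∈ Finset.Icc 1 M, θ i m ω = 1)
    -- Assumption 1 (accurate review selection): `‖θ_i − α‖ ≤ ‖β_i − α‖` a.s.
    (hθclose : ∀ i, 1 ≤ i → ∀ᵐ ω ∂μ,
      ∑ m ∈ Finset.Icc 1 M, (θ i m ω - α m) ^ 2
        ≤ ∑ m ∈ Finset.Icc 1 M, (betaH w R i m ω - α m) ^ 2)
    -- herding model: `P[R_{i+1} = m | 𝓗_i] = γ_i θ_{i,m} + (1 − γ_i) α_m` a.s.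
    (hmodel : ∀ i : ℕ, ∀ m ∈ Finset.Icc 1 M,
      μ[(fun ω => if R (i + 1) ω = m then (1 : ℝ) else 0) | Hsig R i]
        =ᵐ[μ] fun ω => γ i * θ i m ω + (1 - γ i) * α m)
    -- Condition (2): `∑ w̃_i = ∞` and `∑ w̃_i² < ∞`
    (hdiv : Tendsto (fun n => ∑ i ∈ Finset.Icc 1 n, wnorm w i) atTop atTop)
    (hsq : Summable fun i : ℕ => (wnorm w (i + 1)) ^ 2) :
    μ {ω | ∀ m ∈ Finset.Icc 1 M,
        Tendsto (fun i => betaH w R i m ω) atTop (nhds (α m))} = 1 := by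
  classical
  obtain ⟨g₀, hg₀lt, hγg₀⟩ := hγsup
  set g : ℝ := max g₀ 0 with hgdef
  have hg1 : g < 1 := max_lt hg₀lt one_pos
  have hg0 : 0 ≤ g := le_max_right _ _
  have hγg : ∀ i, γ i ≤ g := fun i => le_trans (hγg₀ i) (le_max_left _ _)
  have hγ0 : ∀ i, 0 ≤ γ i := fun i => (hγ i).1
  have hγ1 : ∀ i, γ i ≤ 1 := fun i => (hγ i).2
  have hle : ∀ i, Hsig R i ≤ ‹MeasurableSpace Ω› := Hsig_le R hRmeas
  have ht0 : ∀ i, 0 ≤ wnorm w i := wnorm_nonneg hw hw1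
  have ht1 : ∀ i : ℕ, wnorm w (i + 1) ≤ 1 := fun i => wnorm_le_one hw hw1 (by omega)
  have hβmeas : ∀ i m, Measurable (betaH w R i m) := fun i m =>
    betaH_measurable w R i m fun j _ => hRmeas j
  have hβmeasH : ∀ i m, Measurable[Hsig R i] (betaH w R i m) := fun i m =>
    betaH_measurable w R i m fun j hj => measurable_R_Hsig R hj
  have hind1 : ∀ j ω, 1 ≤ j →
      ∑ m ∈ Finset.Icc 1 M, (if R j ω = m then (1 : ℝ) else 0) = 1 := by
    intro j ω hj
    rw [Finset.sum_ite_eq (Finset.Icc 1 M) (R j ω) (fun _ => (1 : ℝ))]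
    simp [hRrange j hj ω]
  have hβ0 : ∀ i m ω, 1 ≤ i → 0 ≤ betaH w R i m ω := by
    intro i m ω hi
    exact div_nonneg (Finset.sum_nonneg fun j _ => mul_nonneg (hw j)
      (by split <;> norm_num)) (le_of_lt (Sw_pos hw hw1 hi))
  have hβ1 : ∀ i m ω, 1 ≤ i → betaH w R i m ω ≤ 1 := by
    intro i m ω hi
    unfold betaH
    rw [div_le_one (Sw_pos hw hw1 hi)]
    unfold Sw
    refine Finset.sum_le_sum fun j _ => ?_
    have h1 : (if R j ω = m then (1 : ℝ) else 0) ≤ 1 := by split <;> norm_num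
    have h2 : (0:ℝ) ≤ (if R j ω = m then (1 : ℝ) else 0) := by split <;> norm_num
    nlinarith [hw j]
  have hβsum : ∀ i ω, 1 ≤ i → ∑ m ∈ Finset.Icc 1 M, betaH w R i m ω = 1 := by
    intro i ω hi
    unfold betaH
    rw [← Finset.sum_div, Finset.sum_comm]
    have h1 : ∀ j ∈ Finset.Icc 1 i,
        ∑ m ∈ Finset.Icc 1 M, w j * (if R j ω = m then (1 : ℝ) else 0) = w j := by
      intro j hj
      rw [← Finset.mul_sum, hind1 j ω (Finset.mem_Icc.1 hj).1, mul_one]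
    rw [Finset.sum_congr rfl h1]
    exact div_self (ne_of_gt (Sw_pos hw hw1 hi))
  set Vf : ℕ → Ω → ℝ :=
    fun i ω => ∑ m ∈ Finset.Icc 1 M, (betaH w R i m ω - α m) ^ 2 with hVf
  have hV0 : ∀ i ω, 0 ≤ Vf i ω := fun i ω => Finset.sum_nonneg fun m _ => sq_nonneg _
  have hV2 : ∀ i ω, 1 ≤ i → Vf i ω ≤ 2 := fun i ω hi =>
    simplex_dist_sq_le_two _ _ _ (fun m _ => hβ0 i m ω hi) (hβsum i ω hi)
      (fun m hm => (hα m hm).1) hα1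
  have hVmeas : ∀ i, Measurable (Vf i) := fun i =>
    Finset.measurable_sum _ fun m _ => ((hβmeas i m).sub measurable_const).pow_const 2
  have hVint : ∀ i, 1 ≤ i → Integrable (Vf i) μ := fun i hi =>
    integrable_of_bdd (hVmeas i) 2 fun ω =>
      abs_le.2 ⟨by linarith [hV0 i ω], hV2 i ω hi⟩
  have hexpand : ∀ i ω m, betaH w R (i + 1) m ω - α m
      = (1 - wnorm w (i + 1)) * (betaH w R i m ω - α m)
        + wnorm w (i + 1) * ((if R (i + 1) ω = m then (1 : ℝ) else 0) - α m) := by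
    intro i ω m
    rw [betaH_succ hw hw1 R i m ω]; ring
  have hindmeas : ∀ j m, Measurable (fun ω => if R j ω = m then (1 : ℝ) else 0) :=
    fun j m => Measurable.ite (hRmeas j (measurableSet_singleton m))
      measurable_const measurable_const
  have habs1 : ∀ i m ω, 1 ≤ i → m ∈ Finset.Icc 1 M → |betaH w R i m ω - α m| ≤ 1 := by
    intro i m ω hi hm
    have := hβ0 i m ω hi; have := hβ1 i m ω hi
    have := (hα m hm).1; have := (hα m hm).2
    rw [abs_le]; constructor <;> linarith
  have habs2 : ∀ j m ω, m ∈ Finset.Icc 1 M →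
      |(if R j ω = m then (1 : ℝ) else 0) - α m| ≤ 1 := by
    intro j m ω hm
    have := (hα m hm).1; have := (hα m hm).2
    rw [abs_le]; constructor <;> (split <;> linarith)
  have habs3 : ∀ i m ω, m ∈ Finset.Icc 1 M → |θ i m ω - α m| ≤ 1 := by
    intro i m ω hm
    have := (hα m hm).1; have := (hα m hm).2
    have := (hθrange i m ω).1; have := (hθrange i m ω).2
    rw [abs_le]; constructor <;> linarith
  have hθmeasA : ∀ i m, Measurable (θ i m) := fun i m => (hθmeas i m).mono (hle i) le_rfl
  -- per-m conditional expectation identity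
  have hCm : ∀ i m, 1 ≤ i → m ∈ Finset.Icc 1 M →
      ∫ ω, (betaH w R i m ω - α m) * ((if R (i + 1) ω = m then (1 : ℝ) else 0) - α m) ∂μ
        = γ i * ∫ ω, (betaH w R i m ω - α m) * (θ i m ω - α m) ∂μ := by
    intro i m hi hm
    have hfH : Measurable[Hsig R i] (fun ω => betaH w R i m ω - α m) :=
      (hβmeasH i m).sub measurable_const
    have hfm : Measurable (fun ω => betaH w R i m ω - α m) :=
      (hβmeas i m).sub measurable_const
    have hfb : ∀ ω, |betaH w R i m ω - α m| ≤ 1 := fun ω => habs1 i m ω hi hm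
    have key := integral_mul_indicator μ R hRmeas i m _ hfH hfb _ (hmodel i m hm)
    have hint1 : Integrable (fun ω => (betaH w R i m ω - α m)
        * (if R (i + 1) ω = m then (1 : ℝ) else 0)) μ := by
      refine integrable_of_bdd (hfm.mul (hindmeas (i + 1) m)) 1 fun ω => ?_
      rw [abs_mul]
      have h2 : |if R (i + 1) ω = m then (1:ℝ) else 0| ≤ 1 := by split <;> norm_num
      calc |betaH w R i m ω - α m| * |if R (i + 1) ω = m then (1:ℝ) else 0|
          ≤ 1 * 1 := mul_le_mul (hfb ω) h2 (abs_nonneg _) zero_le_one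
        _ = 1 := by norm_num
    have hint2 : Integrable (fun ω => (betaH w R i m ω - α m) * α m) μ := by
      refine integrable_of_bdd (hfm.mul_const _) 1 fun ω => ?_
      rw [abs_mul]
      have := (hα m hm).1; have := (hα m hm).2
      have h2 : |α m| ≤ 1 := by rw [abs_le]; constructor <;> linarith
      calc |betaH w R i m ω - α m| * |α m| ≤ 1 * 1 :=
            mul_le_mul (hfb ω) h2 (abs_nonneg _) zero_le_one
        _ = 1 := by norm_num
    have hint3 : Integrable (fun ω => (betaH w R i m ω - α m)
        * (γ i * θ i m ω + (1 - γ i) * α m)) μ := by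
      refine integrable_of_bdd (hfm.mul ((measurable_const.mul (hθmeasA i m)).add
        measurable_const)) 1 fun ω => ?_
      rw [abs_mul]
      have h3 : |γ i * θ i m ω + (1 - γ i) * α m| ≤ 1 := by
        have := (hα m hm).1; have := (hα m hm).2
        have := (hθrange i m ω).1; have := (hθrange i m ω).2
        have := hγ0 i; have := hγ1 i
        rw [abs_le]; constructor <;> nlinarith
      calc |betaH w R i m ω - α m| * |γ i * θ i m ω + (1 - γ i) * α m| ≤ 1 * 1 :=
            mul_le_mul (hfb ω) h3 (abs_nonneg _) zero_le_one
        _ = 1 := by norm_num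
    calc ∫ ω, (betaH w R i m ω - α m) * ((if R (i + 1) ω = m then (1 : ℝ) else 0) - α m) ∂μ
        = ∫ ω, ((betaH w R i m ω - α m) * (if R (i + 1) ω = m then (1 : ℝ) else 0)
            - (betaH w R i m ω - α m) * α m) ∂μ := by
          refine integral_congr_ae (Eventually.of_forall fun ω => ?_); ring
      _ = (∫ ω, (betaH w R i m ω - α m) * (if R (i + 1) ω = m then (1 : ℝ) else 0) ∂μ)
            - ∫ ω, (betaH w R i m ω - α m) * α m ∂μ := integral_sub hint1 hint2
      _ = (∫ ω, (betaH w R i m ω - α m) * (γ i * θ i m ω + (1 - γ i) * α m) ∂μ)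
            - ∫ ω, (betaH w R i m ω - α m) * α m ∂μ := by rw [key]
      _ = ∫ ω, ((betaH w R i m ω - α m) * (γ i * θ i m ω + (1 - γ i) * α m)
            - (betaH w R i m ω - α m) * α m) ∂μ := (integral_sub hint3 hint2).symm
      _ = ∫ ω, γ i * ((betaH w R i m ω - α m) * (θ i m ω - α m)) ∂μ := by
          refine integral_congr_ae (Eventually.of_forall fun ω => ?_); ring
      _ = γ i * ∫ ω, (betaH w R i m ω - α m) * (θ i m ω - α m) ∂μ :=
          integral_const_mul _ _
    -- integrability of the cross and quadratic terms
  have hCint : ∀ i, 1 ≤ i → Integrable (fun ω => ∑ m ∈ Finset.Icc 1 M,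
      (betaH w R i m ω - α m) * ((if R (i + 1) ω = m then (1 : ℝ) else 0) - α m)) μ := by
    intro i hi
    refine integrable_of_bdd (Finset.measurable_sum _ fun m _ =>
      ((hβmeas i m).sub measurable_const).mul ((hindmeas (i + 1) m).sub measurable_const))
      (M : ℝ) fun ω => ?_
    calc |∑ m ∈ Finset.Icc 1 M, (betaH w R i m ω - α m)
            * ((if R (i + 1) ω = m then (1 : ℝ) else 0) - α m)|
        ≤ ∑ m ∈ Finset.Icc 1 M, |(betaH w R i m ω - α m)
            * ((if R (i + 1) ω = m then (1 : ℝ) else 0) - α m)| :=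
          Finset.abs_sum_le_sum_abs _ _
      _ ≤ ∑ m ∈ Finset.Icc 1 M, 1 := by
          refine Finset.sum_le_sum fun m hm => ?_
          rw [abs_mul]
          calc |betaH w R i m ω - α m| * |(if R (i + 1) ω = m then (1 : ℝ) else 0) - α m|
              ≤ 1 * 1 := mul_le_mul (habs1 i m ω hi hm) (habs2 (i + 1) m ω hm)
                (abs_nonneg _) zero_le_one
            _ = 1 := by norm_num
      _ = (M : ℝ) := by simp
  have hDint : ∀ i, 1 ≤ i → Integrable (fun ω => ∑ m ∈ Finset.Icc 1 M,
      (betaH w R i m ω - α m) * (θ i m ω - α m)) μ := by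
    intro i hi
    refine integrable_of_bdd (Finset.measurable_sum _ fun m _ =>
      ((hβmeas i m).sub measurable_const).mul ((hθmeasA i m).sub measurable_const))
      (M : ℝ) fun ω => ?_
    calc |∑ m ∈ Finset.Icc 1 M, (betaH w R i m ω - α m) * (θ i m ω - α m)|
        ≤ ∑ m ∈ Finset.Icc 1 M, |(betaH w R i m ω - α m) * (θ i m ω - α m)| :=
          Finset.abs_sum_le_sum_abs _ _
      _ ≤ ∑ m ∈ Finset.Icc 1 M, 1 := by
          refine Finset.sum_le_sum fun m hm => ?_
          rw [abs_mul]
          calc |betaH w R i m ω - α m| * |θ i m ω - α m| ≤ 1 * 1 :=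
                mul_le_mul (habs1 i m ω hi hm) (habs3 i m ω hm) (abs_nonneg _) zero_le_one
            _ = 1 := by norm_num
      _ = (M : ℝ) := by simp
  have hQ0 : ∀ i ω, (0:ℝ) ≤ ∑ m ∈ Finset.Icc 1 M,
      ((if R (i + 1) ω = m then (1 : ℝ) else 0) - α m) ^ 2 :=
    fun i ω => Finset.sum_nonneg fun m _ => sq_nonneg _
  have hQ2 : ∀ i ω, (∑ m ∈ Finset.Icc 1 M,
      ((if R (i + 1) ω = m then (1 : ℝ) else 0) - α m) ^ 2) ≤ 2 := fun i ω =>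
    simplex_dist_sq_le_two _ _ _ (fun m _ => by split <;> norm_num)
      (hind1 (i + 1) ω (by omega)) (fun m hm => (hα m hm).1) hα1
  have hQint : ∀ i, Integrable (fun ω => ∑ m ∈ Finset.Icc 1 M,
      ((if R (i + 1) ω = m then (1 : ℝ) else 0) - α m) ^ 2) μ := by
    intro i
    refine integrable_of_bdd (Finset.measurable_sum _ fun m _ =>
      ((hindmeas (i + 1) m).sub measurable_const).pow_const 2) 2 fun ω => ?_
    exact abs_le.2 ⟨by linarith [hQ0 i ω], hQ2 i ω⟩
  -- the cross term integral equals γ i times the θ cross term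
  have hCeq : ∀ i, 1 ≤ i →
      (∫ ω, (∑ m ∈ Finset.Icc 1 M, (betaH w R i m ω - α m)
          * ((if R (i + 1) ω = m then (1 : ℝ) else 0) - α m)) ∂μ)
        = γ i * ∫ ω, (∑ m ∈ Finset.Icc 1 M,
            (betaH w R i m ω - α m) * (θ i m ω - α m)) ∂μ := by
    intro i hi
    have hint1 : ∀ m ∈ Finset.Icc 1 M, Integrable (fun ω => (betaH w R i m ω - α m)
        * ((if R (i + 1) ω = m then (1 : ℝ) else 0) - α m)) μ := by
      intro m hm
      refine integrable_of_bdd (((hβmeas i m).sub measurable_const).mul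
        ((hindmeas (i + 1) m).sub measurable_const)) 1 fun ω => ?_
      rw [abs_mul]
      calc |betaH w R i m ω - α m| * |(if R (i + 1) ω = m then (1 : ℝ) else 0) - α m|
          ≤ 1 * 1 := mul_le_mul (habs1 i m ω hi hm) (habs2 (i + 1) m ω hm)
            (abs_nonneg _) zero_le_one
        _ = 1 := by norm_num
    have hint2 : ∀ m ∈ Finset.Icc 1 M, Integrable (fun ω => (betaH w R i m ω - α m)
        * (θ i m ω - α m)) μ := by
      intro m hm
      refine integrable_of_bdd (((hβmeas i m).sub measurable_const).mul
        ((hθmeasA i m).sub measurable_const)) 1 fun ω => ?_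
      rw [abs_mul]
      calc |betaH w R i m ω - α m| * |θ i m ω - α m| ≤ 1 * 1 :=
            mul_le_mul (habs1 i m ω hi hm) (habs3 i m ω hm) (abs_nonneg _) zero_le_one
        _ = 1 := by norm_num
    rw [integral_finset_sum _ hint1, integral_finset_sum _ hint2, Finset.mul_sum]
    exact Finset.sum_congr rfl fun m hm => hCm i m hi hm
  -- a.e. bound for the θ cross term
  have hDle : ∀ i, 1 ≤ i → ∀ᵐ ω ∂μ,
      (∑ m ∈ Finset.Icc 1 M, (betaH w R i m ω - α m) * (θ i m ω - α m)) ≤ Vf i ω := by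
    intro i hi
    filter_upwards [hθclose i hi] with ω hω
    have hcs := Real.sum_mul_le_sqrt_mul_sqrt (Finset.Icc 1 M)
      (fun m => betaH w R i m ω - α m) (fun m => θ i m ω - α m)
    have h1 : Real.sqrt (∑ m ∈ Finset.Icc 1 M, (θ i m ω - α m) ^ 2)
        ≤ Real.sqrt (Vf i ω) := Real.sqrt_le_sqrt hω
    calc ∑ m ∈ Finset.Icc 1 M, (betaH w R i m ω - α m) * (θ i m ω - α m)
        ≤ Real.sqrt (Vf i ω) * Real.sqrt (∑ m ∈ Finset.Icc 1 M, (θ i m ω - α m) ^ 2) := hcs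
      _ ≤ Real.sqrt (Vf i ω) * Real.sqrt (Vf i ω) :=
          mul_le_mul_of_nonneg_left h1 (Real.sqrt_nonneg _)
      _ = Vf i ω := Real.mul_self_sqrt (hV0 i ω)
  -- expansion of V at step i+1
  have hVsucc : ∀ i ω, Vf (i + 1) ω
      = (1 - wnorm w (i + 1)) ^ 2 * Vf i ω
        + 2 * wnorm w (i + 1) * (1 - wnorm w (i + 1))
            * (∑ m ∈ Finset.Icc 1 M, (betaH w R i m ω - α m)
                * ((if R (i + 1) ω = m then (1 : ℝ) else 0) - α m))
        + (wnorm w (i + 1)) ^ 2 * (∑ m ∈ Finset.Icc 1 M,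
            ((if R (i + 1) ω = m then (1 : ℝ) else 0) - α m) ^ 2) := by
    intro i ω
    simp only [hVf]
    rw [Finset.mul_sum, Finset.mul_sum, Finset.mul_sum, ← Finset.sum_add_distrib,
      ← Finset.sum_add_distrib]
    refine Finset.sum_congr rfl fun m _ => ?_
    rw [hexpand i ω m]; ring
  -- one-step expectation inequality
  have hstepE : ∀ i, 1 ≤ i → (∫ ω, Vf (i + 1) ω ∂μ)
      ≤ (∫ ω, Vf i ω ∂μ) - 2 * (1 - g) * (wnorm w (i + 1) * ∫ ω, Vf i ω ∂μ)
        + 4 * (wnorm w (i + 1)) ^ 2 := by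
    intro i hi
    have hVi := hVint i hi
    have hCi := hCint i hi
    have hDi := hDint i hi
    have hQi := hQint i
    have e0 : (∫ ω, Vf (i + 1) ω ∂μ)
        = (1 - wnorm w (i + 1)) ^ 2 * (∫ ω, Vf i ω ∂μ)
          + 2 * wnorm w (i + 1) * (1 - wnorm w (i + 1))
              * (∫ ω, (∑ m ∈ Finset.Icc 1 M, (betaH w R i m ω - α m)
                  * ((if R (i + 1) ω = m then (1 : ℝ) else 0) - α m)) ∂μ)
          + (wnorm w (i + 1)) ^ 2 * (∫ ω, (∑ m ∈ Finset.Icc 1 M,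
              ((if R (i + 1) ω = m then (1 : ℝ) else 0) - α m) ^ 2) ∂μ) := by
      rw [integral_congr_ae (Eventually.of_forall fun ω => hVsucc i ω)]
      have hA : Integrable (fun ω => (1 - wnorm w (i + 1)) ^ 2 * Vf i ω) μ := hVi.const_mul _
      have hB : Integrable (fun ω => 2 * wnorm w (i + 1) * (1 - wnorm w (i + 1))
          * (∑ m ∈ Finset.Icc 1 M, (betaH w R i m ω - α m)
              * ((if R (i + 1) ω = m then (1 : ℝ) else 0) - α m))) μ := hCi.const_mul _
      have hC' : Integrable (fun ω => (wnorm w (i + 1)) ^ 2 * (∑ m ∈ Finset.Icc 1 M,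
          ((if R (i + 1) ω = m then (1 : ℝ) else 0) - α m) ^ 2)) μ := hQi.const_mul _
      refine Eq.trans (integral_add (hA.add hB) hC') ?_
      refine Eq.trans (congrArg (fun z => z + ∫ ω, (wnorm w (i + 1)) ^ 2
        * (∑ m ∈ Finset.Icc 1 M, ((if R (i + 1) ω = m then (1 : ℝ) else 0) - α m) ^ 2) ∂μ)
        (integral_add hA hB)) ?_
      rw [integral_const_mul, integral_const_mul, integral_const_mul]
    have hvi0 : 0 ≤ ∫ ω, Vf i ω ∂μ := integral_nonneg (hV0 i)
    have hvi2 : (∫ ω, Vf i ω ∂μ) ≤ 2 := by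
      have := integral_mono hVi (integrable_const 2) (fun ω => hV2 i ω hi)
      simpa using this
    have hID : (∫ ω, (∑ m ∈ Finset.Icc 1 M,
        (betaH w R i m ω - α m) * (θ i m ω - α m)) ∂μ) ≤ ∫ ω, Vf i ω ∂μ :=
      integral_mono_ae hDi hVi (hDle i hi)
    have h3 : γ i * (∫ ω, (∑ m ∈ Finset.Icc 1 M,
        (betaH w R i m ω - α m) * (θ i m ω - α m)) ∂μ) ≤ g * ∫ ω, Vf i ω ∂μ := by
      calc γ i * (∫ ω, (∑ m ∈ Finset.Icc 1 M,
            (betaH w R i m ω - α m) * (θ i m ω - α m)) ∂μ)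
          ≤ γ i * ∫ ω, Vf i ω ∂μ := mul_le_mul_of_nonneg_left hID (hγ0 i)
        _ ≤ g * ∫ ω, Vf i ω ∂μ := mul_le_mul_of_nonneg_right (hγg i) hvi0
    have hIQ : (∫ ω, (∑ m ∈ Finset.Icc 1 M,
        ((if R (i + 1) ω = m then (1 : ℝ) else 0) - α m) ^ 2) ∂μ) ≤ 2 := by
      have := integral_mono hQi (integrable_const 2) (fun ω => hQ2 i ω)
      simpa using this
    have hIQ0 : 0 ≤ ∫ ω, (∑ m ∈ Finset.Icc 1 M,
        ((if R (i + 1) ω = m then (1 : ℝ) else 0) - α m) ^ 2) ∂μ :=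
      integral_nonneg (hQ0 i)
    rw [e0, hCeq i hi]
    set t := wnorm w (i + 1) with htdef
    set vi := ∫ ω, Vf i ω ∂μ with hvidef
    set ID := ∫ ω, (∑ m ∈ Finset.Icc 1 M,
        (betaH w R i m ω - α m) * (θ i m ω - α m)) ∂μ with hIDdef
    set IQ := ∫ ω, (∑ m ∈ Finset.Icc 1 M,
        ((if R (i + 1) ω = m then (1 : ℝ) else 0) - α m) ^ 2) ∂μ with hIQdef
    have htn : 0 ≤ t := ht0 _
    have ht1' : t ≤ 1 := ht1 i
    have hb : 0 ≤ 2 * t * (1 - t) := by nlinarith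
    have h4 : 2 * t * (1 - t) * (γ i * ID) ≤ 2 * t * (1 - t) * (g * vi) :=
      mul_le_mul_of_nonneg_left h3 hb
    have h5 : t ^ 2 * IQ ≤ t ^ 2 * 2 := mul_le_mul_of_nonneg_left hIQ (sq_nonneg t)
    nlinarith [mul_le_mul_of_nonneg_left hvi2 (sq_nonneg t),
      mul_nonneg (mul_nonneg hg0 (sq_nonneg t)) hvi0, sq_nonneg t]
    -- telescoping
  have hv1le : (∫ ω, Vf 1 ω ∂μ) ≤ 2 := by
    have := integral_mono (hVint 1 le_rfl) (integrable_const 2) (fun ω => hV2 1 ω le_rfl)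
    simpa using this
  have htel : ∀ n : ℕ, (∫ ω, Vf (n + 1) ω ∂μ)
      + ∑ i ∈ Finset.Icc 1 n, 2 * (1 - g) * (wnorm w (i + 1) * ∫ ω, Vf i ω ∂μ)
      ≤ 2 + ∑ i ∈ Finset.Icc 1 n, 4 * (wnorm w (i + 1)) ^ 2 := by
    intro n
    induction n with
    | zero => simpa using hv1le
    | succ n ih =>
      rw [Finset.sum_Icc_succ_top (by omega : 1 ≤ n + 1),
        Finset.sum_Icc_succ_top (by omega : 1 ≤ n + 1)]
      have hs := hstepE (n + 1) (by omega)
      linarith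
  have hTsum : Summable (fun i : ℕ => (wnorm w (i + 1)) ^ 2) := hsq
  set T : ℝ := ∑' i : ℕ, (wnorm w (i + 1)) ^ 2 with hT
  have hsummv : Summable (fun i : ℕ => wnorm w (i + 1 + 1) * ∫ ω, Vf (i + 1) ω ∂μ) := by
    refine summable_of_sum_range_le (c := (2 + 4 * T) / (2 * (1 - g)))
      (fun i => mul_nonneg (ht0 _) (integral_nonneg (hV0 _))) fun n => ?_
    have he : ∑ i ∈ Finset.range n, wnorm w (i + 1 + 1) * ∫ ω, Vf (i + 1) ω ∂μ
        = ∑ i ∈ Finset.Icc 1 n, wnorm w (i + 1) * ∫ ω, Vf i ω ∂μ :=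
      (sum_Icc_one_eq_range (fun i => wnorm w (i + 1) * ∫ ω, Vf i ω ∂μ) n).symm
    rw [he]
    have h1 : ∑ i ∈ Finset.Icc 1 n, (wnorm w (i + 1)) ^ 2 ≤ T := by
      refine le_trans (Finset.sum_le_sum_of_subset_of_nonneg
        (fun i hi => Finset.mem_range.2 (by
          have := Finset.mem_Icc.1 hi; omega)) fun i _ _ => sq_nonneg _)
        (Summable.sum_le_tsum (Finset.range (n + 1)) (fun i _ => sq_nonneg _) hTsum)
    have h2 := htel n
    have h3 : 0 ≤ ∫ ω, Vf (n + 1) ω ∂μ := integral_nonneg (hV0 _)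
    have h4 : ∑ i ∈ Finset.Icc 1 n, 2 * (1 - g) * (wnorm w (i + 1) * ∫ ω, Vf i ω ∂μ)
        = 2 * (1 - g) * ∑ i ∈ Finset.Icc 1 n, wnorm w (i + 1) * ∫ ω, Vf i ω ∂μ := by
      rw [Finset.mul_sum]
    have h5 : 2 * (1 - g) * ∑ i ∈ Finset.Icc 1 n, wnorm w (i + 1) * ∫ ω, Vf i ω ∂μ
        ≤ 2 + 4 * T := by
      have h6 : ∑ i ∈ Finset.Icc 1 n, 4 * (wnorm w (i + 1)) ^ 2
          = 4 * ∑ i ∈ Finset.Icc 1 n, (wnorm w (i + 1)) ^ 2 := by rw [Finset.mul_sum]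
      rw [← h4]; nlinarith
    rw [le_div_iff₀ (by linarith : (0:ℝ) < 2 * (1 - g))]
    linarith
  -- Tonelli: a.e. summability
  have haes : ∀ᵐ ω ∂μ, Summable (fun i : ℕ => wnorm w (i + 1 + 1) * Vf (i + 1) ω) := by
    have hFmeas : ∀ i : ℕ, Measurable (fun ω =>
        ENNReal.ofReal (wnorm w (i + 1 + 1) * Vf (i + 1) ω)) := fun i =>
      (measurable_const.mul (hVmeas (i + 1))).ennreal_ofReal
    have hint : ∀ i : ℕ, Integrable (fun ω => wnorm w (i + 1 + 1) * Vf (i + 1) ω) μ :=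
      fun i => (hVint (i + 1) (by omega)).const_mul _
    have hlin2 : ∀ i : ℕ, (∫⁻ ω, ENNReal.ofReal (wnorm w (i + 1 + 1) * Vf (i + 1) ω) ∂μ)
        = ENNReal.ofReal (wnorm w (i + 1 + 1) * ∫ ω, Vf (i + 1) ω ∂μ) := by
      intro i
      rw [← ofReal_integral_eq_lintegral_ofReal (hint i)
        (Eventually.of_forall fun ω => mul_nonneg (ht0 _) (hV0 _ _)), integral_const_mul]
    have htop : (∫⁻ ω, ∑' i : ℕ, ENNReal.ofReal (wnorm w (i + 1 + 1) * Vf (i + 1) ω) ∂μ) ≠ ⊤ := by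
      rw [lintegral_tsum (fun i => (hFmeas i).aemeasurable)]
      have h7 : ∀ i : ℕ, (∫⁻ ω, ENNReal.ofReal (wnorm w (i + 1 + 1) * Vf (i + 1) ω) ∂μ)
          = ENNReal.ofReal (wnorm w (i + 1 + 1) * ∫ ω, Vf (i + 1) ω ∂μ) := hlin2
      rw [tsum_congr h7, ← ENNReal.ofReal_tsum_of_nonneg
        (fun i => mul_nonneg (ht0 _) (integral_nonneg (hV0 _))) hsummv]
      exact ENNReal.ofReal_ne_top
    have hfin := ae_lt_top (Measurable.ennreal_tsum hFmeas) htop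
    filter_upwards [hfin] with ω hω
    have hsumm := ENNReal.summable_toReal hω.ne
    refine hsumm.congr fun i => ?_
    exact ENNReal.toReal_ofReal (mul_nonneg (ht0 _) (hV0 _ _))
  -- a.e. convergence of √V to 0
  have hU : ∀ᵐ ω ∂μ, Tendsto (fun i => Real.sqrt (Vf i ω)) atTop (nhds 0) := by
    filter_upwards [haes] with ω hω
    have hsummω : Summable (fun i : ℕ => wnorm w (i + 1) * Vf i ω) :=
      (summable_nat_add_iff 1).1 hω
    refine pathwise (c := Real.sqrt 2) (Real.sqrt_pos.2 (by norm_num))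
      _ (fun i => wnorm w (i + 1)) (fun i => Real.sqrt_nonneg _) (fun i => ht0 _)
      ?_ ?_ ?_ ?_
    · -- step inequality
      intro i
      have h0 : Vf (i + 1) ω = ∑ m ∈ Finset.Icc 1 M,
          ((1 - wnorm w (i + 1)) * (betaH w R i m ω - α m)
            + wnorm w (i + 1) * ((if R (i + 1) ω = m then (1 : ℝ) else 0) - α m)) ^ 2 := by
        simp only [hVf]
        exact Finset.sum_congr rfl fun m _ => by rw [hexpand i ω m]
      have h1 := sqrt_sum_sq_add_le (Finset.Icc 1 M)
        (fun m => (1 - wnorm w (i + 1)) * (betaH w R i m ω - α m))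
        (fun m => wnorm w (i + 1) * ((if R (i + 1) ω = m then (1 : ℝ) else 0) - α m))
      have h2 : ∑ m ∈ Finset.Icc 1 M,
          ((1 - wnorm w (i + 1)) * (betaH w R i m ω - α m)) ^ 2
          = (1 - wnorm w (i + 1)) ^ 2 * Vf i ω := by
        simp only [hVf]
        rw [Finset.mul_sum]
        exact Finset.sum_congr rfl fun m _ => by ring
      have h3 : ∑ m ∈ Finset.Icc 1 M,
          (wnorm w (i + 1) * ((if R (i + 1) ω = m then (1 : ℝ) else 0) - α m)) ^ 2
          = (wnorm w (i + 1)) ^ 2 * ∑ m ∈ Finset.Icc 1 M,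
              ((if R (i + 1) ω = m then (1 : ℝ) else 0) - α m) ^ 2 := by
        rw [Finset.mul_sum]
        exact Finset.sum_congr rfl fun m _ => by ring
      have h4 : Real.sqrt ((1 - wnorm w (i + 1)) ^ 2 * Vf i ω) ≤ Real.sqrt (Vf i ω) := by
        rw [Real.sqrt_mul (sq_nonneg _), Real.sqrt_sq_eq_abs]
        have h5 : |1 - wnorm w (i + 1)| ≤ 1 := by
          rw [abs_le]; constructor <;> [linarith [ht1 i]; linarith [ht0 (i + 1)]]
        nlinarith [Real.sqrt_nonneg (Vf i ω), abs_nonneg (1 - wnorm w (i + 1))]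
      have h6 : Real.sqrt ((wnorm w (i + 1)) ^ 2 * ∑ m ∈ Finset.Icc 1 M,
          ((if R (i + 1) ω = m then (1 : ℝ) else 0) - α m) ^ 2)
          ≤ Real.sqrt 2 * wnorm w (i + 1) := by
        rw [Real.sqrt_mul (sq_nonneg _), Real.sqrt_sq_eq_abs,
          abs_of_nonneg (ht0 (i + 1))]
        have h7 : Real.sqrt (∑ m ∈ Finset.Icc 1 M,
            ((if R (i + 1) ω = m then (1 : ℝ) else 0) - α m) ^ 2) ≤ Real.sqrt 2 :=
          Real.sqrt_le_sqrt (hQ2 i ω)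
        calc wnorm w (i + 1) * Real.sqrt (∑ m ∈ Finset.Icc 1 M,
              ((if R (i + 1) ω = m then (1 : ℝ) else 0) - α m) ^ 2)
            ≤ wnorm w (i + 1) * Real.sqrt 2 :=
              mul_le_mul_of_nonneg_left h7 (ht0 (i + 1))
          _ = Real.sqrt 2 * wnorm w (i + 1) := mul_comm _ _
      calc Real.sqrt (Vf (i + 1) ω)
          = Real.sqrt (∑ m ∈ Finset.Icc 1 M,
              ((1 - wnorm w (i + 1)) * (betaH w R i m ω - α m)
                + wnorm w (i + 1) * ((if R (i + 1) ω = m then (1 : ℝ) else 0) - α m)) ^ 2) := by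
            rw [h0]
        _ ≤ Real.sqrt ((1 - wnorm w (i + 1)) ^ 2 * Vf i ω)
            + Real.sqrt ((wnorm w (i + 1)) ^ 2 * ∑ m ∈ Finset.Icc 1 M,
                ((if R (i + 1) ω = m then (1 : ℝ) else 0) - α m) ^ 2) := by
            rw [← h2, ← h3]; exact h1
        _ ≤ Real.sqrt (Vf i ω) + Real.sqrt 2 * wnorm w (i + 1) := add_le_add h4 h6
    · -- summability of a i * U i ^ 2
      refine hsummω.congr fun i => ?_
      rw [Real.sq_sqrt (hV0 i ω)]
    · -- divergence
      intro hS
      have h1 := hS.hasSum.tendsto_sum_nat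
      have heq : (fun n => ∑ i ∈ Finset.range n, wnorm w (i + 1))
          = fun n => ∑ i ∈ Finset.Icc 1 n, wnorm w i :=
        funext fun n => (sum_Icc_one_eq_range (wnorm w) n).symm
      rw [heq] at h1
      exact not_tendsto_atTop_of_tendsto_nhds h1 hdiv
    · -- a → 0
      have h2 := hsq.tendsto_atTop_zero
      have h3 : Tendsto (fun i : ℕ => Real.sqrt ((wnorm w (i + 1)) ^ 2)) atTop (nhds 0) := by
        have h4 := (Real.continuous_sqrt.tendsto 0).comp h2
        simpa [Function.comp_def] using h4
      exact h3.congr fun i => Real.sqrt_sq (ht0 _)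
  -- conclusion: a.e. convergence of betaH to α
  have hconc : ∀ᵐ ω ∂μ, ∀ m ∈ Finset.Icc 1 M,
      Tendsto (fun i => betaH w R i m ω) atTop (nhds (α m)) := by
    filter_upwards [hU] with ω hω m hm
    have h1 : Tendsto (fun i => betaH w R i m ω - α m) atTop (nhds 0) := by
      refine squeeze_zero_norm (fun i => ?_) hω
      rw [Real.norm_eq_abs, ← Real.sqrt_sq_eq_abs]
      exact Real.sqrt_le_sqrt
        (Finset.single_le_sum (f := fun m => (betaH w R i m ω - α m) ^ 2)
          (fun m _ => sq_nonneg _) hm)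
    have h2 := h1.add_const (α m)
    simpa using h2
  -- final measure computation
  refine le_antisymm prob_le_one ?_
  have h0 : μ {ω | ¬ ∀ m ∈ Finset.Icc 1 M,
      Tendsto (fun i => betaH w R i m ω) atTop (nhds (α m))} = 0 := by
    exact hconc
  calc (1 : ENNReal) = μ Set.univ := measure_univ.symm
    _ ≤ μ {ω | ∀ m ∈ Finset.Icc 1 M,
          Tendsto (fun i => betaH w R i m ω) atTop (nhds (α m))}
        + μ {ω | ¬ ∀ m ∈ Finset.Icc 1 M,
          Tendsto (fun i => betaH w R i m ω) atTop (nhds (α m))} := by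
        refine le_trans (measure_mono fun ω _ => ?_) (measure_union_le _ _)
        by_cases h : ∀ m ∈ Finset.Icc 1 M,
            Tendsto (fun i => betaH w R i m ω) atTop (nhds (α m))
        · exact Or.inl h
        · exact Or.inr h
    _ = μ {ω | ∀ m ∈ Finset.Icc 1 M,
          Tendsto (fun i => betaH w R i m ω) atTop (nhds (α m))} := by
        rw [h0, add_zero]
end

section
/- The convergence-speed metric φ_i is non-increasing in each herding strength: if γ and γ′ are sequences in [0,1] with γ_j ≤ γ′_j for all j ≤ i (and all weights w̃_ℓ ∈ [0,1) for ℓ ≥ 2 and accuracies η_ℓ ∈ [0,1] fixed), then φ_i(w, η, γ′) ≤ φ_i(w, η, γ). -/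
/-- `ϕ_j = ∏_{ℓ=1}^j [1 − w̃_{ℓ+1} (1 − γ_ℓ + η_ℓ γ_ℓ)]` (with `ϕ_0 = 1`),
where `wt` is the sequence of normalized weights. -/
noncomputable def varphi (wt γ η : ℕ → ℝ) (j : ℕ) : ℝ :=
  ∏ ℓ ∈ Finset.Icc 1 j, (1 - wt (ℓ + 1) * (1 - γ ℓ + η ℓ * γ ℓ))

/-- Convergence-speed metric `φ_i = 1 / ((ϕ_{i−1}²/2) · ∑_{j=1}^i w̃_j²/ϕ_{j−1}²)`. -/
noncomputable def phiSpeed (wt γ η : ℕ → ℝ) (i : ℕ) : ℝ :=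
  1 / ((varphi wt γ η (i - 1)) ^ 2 / 2 *
    ∑ j ∈ Finset.Icc 1 i, (wt j) ^ 2 / (varphi wt γ η (j - 1)) ^ 2)

/-- the convergence-speed metric `φ_i` is non-increasing in each
herding strength `γ_j`, `j ≤ i`. -/
theorem stmt_4 (wt γ γ' η : ℕ → ℝ) (i : ℕ) (hi : 1 ≤ i)
    (hwt : ∀ ℓ, 2 ≤ ℓ → wt ℓ ∈ Set.Ico (0 : ℝ) 1)
    (hγ : ∀ j, γ j ∈ Set.Icc (0 : ℝ) 1)
    (hγ' : ∀ j, γ' j ∈ Set.Icc (0 : ℝ) 1)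
    (hη : ∀ j, η j ∈ Set.Icc (0 : ℝ) 1)
    (hle : ∀ j ≤ i, γ j ≤ γ' j) :
    phiSpeed wt γ' η i ≤ phiSpeed wt γ η i := by
  -- factor positivity
  have hfac : ∀ (δ : ℕ → ℝ), (∀ j, δ j ∈ Set.Icc (0:ℝ) 1) → ∀ ℓ, 1 ≤ ℓ →
      0 < 1 - wt (ℓ+1) * (1 - δ ℓ + η ℓ * δ ℓ) := by
    intro δ hδ ℓ hℓ
    have hw := hwt (ℓ+1) (by omega)
    have h1 := hδ ℓ; have h2 := hη ℓ
    simp only [Set.mem_Ico, Set.mem_Icc] at hw h1 h2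
    have ht1 : η ℓ * δ ℓ ≤ δ ℓ := by nlinarith [h1.1, h2.2]
    have ht2 : 1 - δ ℓ + η ℓ * δ ℓ ≤ 1 := by linarith
    have := mul_le_of_le_one_right hw.1 ht2
    linarith [hw.2]
  have hpos : ∀ (δ : ℕ → ℝ), (∀ j, δ j ∈ Set.Icc (0:ℝ) 1) → ∀ m, 0 < varphi wt δ η m := by
    intro δ hδ m
    exact Finset.prod_pos (fun ℓ hℓ => hfac δ hδ ℓ (Finset.mem_Icc.mp hℓ).1)
  -- rewrite ϕ as product over Ioc 0
  have hioc : ∀ (δ : ℕ → ℝ) m, varphi wt δ η m =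
      ∏ ℓ ∈ Finset.Ioc 0 m, (1 - wt (ℓ + 1) * (1 - δ ℓ + η ℓ * δ ℓ)) := by
    intro δ m
    rw [varphi, ← Finset.Icc_add_one_left_eq_Ioc]; rfl
  -- key identity: ϕ_{i-1}² * Σ wⱼ²/ϕ_{j-1}² = Σ wⱼ² * Pⱼ²
  have key : ∀ (δ : ℕ → ℝ), (∀ j, δ j ∈ Set.Icc (0:ℝ) 1) →
      (varphi wt δ η (i-1))^2 * ∑ j ∈ Finset.Icc 1 i, (wt j)^2 / (varphi wt δ η (j-1))^2
      = ∑ j ∈ Finset.Icc 1 i, (wt j)^2 *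
          (∏ ℓ ∈ Finset.Ioc (j-1) (i-1), (1 - wt (ℓ + 1) * (1 - δ ℓ + η ℓ * δ ℓ)))^2 := by
    intro δ hδ
    rw [Finset.mul_sum]
    refine Finset.sum_congr rfl fun j hj => ?_
    obtain ⟨hj1, hj2⟩ := Finset.mem_Icc.mp hj
    have hsplit : varphi wt δ η (j-1) *
        (∏ ℓ ∈ Finset.Ioc (j-1) (i-1), (1 - wt (ℓ + 1) * (1 - δ ℓ + η ℓ * δ ℓ)))
        = varphi wt δ η (i-1) := by
      rw [hioc, hioc]
      exact Finset.prod_Ioc_consecutive _ (Nat.zero_le _) (by omega)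
    have h0 : (varphi wt δ η (j-1)) ≠ 0 := ne_of_gt (hpos δ hδ (j-1))
    rw [← hsplit]
    field_simp
  -- comparison of the two sums
  have hsum : ∑ j ∈ Finset.Icc 1 i, (wt j)^2 *
        (∏ ℓ ∈ Finset.Ioc (j-1) (i-1), (1 - wt (ℓ + 1) * (1 - γ ℓ + η ℓ * γ ℓ)))^2
      ≤ ∑ j ∈ Finset.Icc 1 i, (wt j)^2 *
        (∏ ℓ ∈ Finset.Ioc (j-1) (i-1), (1 - wt (ℓ + 1) * (1 - γ' ℓ + η ℓ * γ' ℓ)))^2 := by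
    refine Finset.sum_le_sum fun j hj => ?_
    obtain ⟨hj1, hj2⟩ := Finset.mem_Icc.mp hj
    have hP : (∏ ℓ ∈ Finset.Ioc (j-1) (i-1), (1 - wt (ℓ + 1) * (1 - γ ℓ + η ℓ * γ ℓ)))
        ≤ ∏ ℓ ∈ Finset.Ioc (j-1) (i-1), (1 - wt (ℓ + 1) * (1 - γ' ℓ + η ℓ * γ' ℓ)) := by
      refine Finset.prod_le_prod (fun ℓ hℓ => ?_) (fun ℓ hℓ => ?_)
      · obtain ⟨hℓ1, hℓ2⟩ := Finset.mem_Ioc.mp hℓ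
        exact le_of_lt (hfac γ hγ ℓ (by omega))
      · obtain ⟨hℓ1, hℓ2⟩ := Finset.mem_Ioc.mp hℓ
        have hw := hwt (ℓ+1) (by omega)
        have h2 := hη ℓ
        have hg := hle ℓ (by omega)
        simp only [Set.mem_Ico, Set.mem_Icc] at hw h2
        nlinarith [mul_nonneg (mul_nonneg hw.1 (sub_nonneg.mpr hg)) (sub_nonneg.mpr h2.2)]
    have hP0 : (0:ℝ) ≤ ∏ ℓ ∈ Finset.Ioc (j-1) (i-1), (1 - wt (ℓ + 1) * (1 - γ ℓ + η ℓ * γ ℓ)) := by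
      refine Finset.prod_nonneg fun ℓ hℓ => ?_
      obtain ⟨hℓ1, hℓ2⟩ := Finset.mem_Ioc.mp hℓ
      exact le_of_lt (hfac γ hγ ℓ (by omega))
    exact mul_le_mul_of_nonneg_left (pow_le_pow_left₀ hP0 hP 2) (sq_nonneg (wt j))
  -- nonnegativity of the γ-sum and the zero case
  have hTnn : (0:ℝ) ≤ ∑ j ∈ Finset.Icc 1 i, (wt j)^2 *
      (∏ ℓ ∈ Finset.Ioc (j-1) (i-1), (1 - wt (ℓ + 1) * (1 - γ ℓ + η ℓ * γ ℓ)))^2 :=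
    Finset.sum_nonneg fun j hj => by positivity
  have hzero : (∑ j ∈ Finset.Icc 1 i, (wt j)^2 *
        (∏ ℓ ∈ Finset.Ioc (j-1) (i-1), (1 - wt (ℓ + 1) * (1 - γ ℓ + η ℓ * γ ℓ)))^2) = 0 →
      (∑ j ∈ Finset.Icc 1 i, (wt j)^2 *
        (∏ ℓ ∈ Finset.Ioc (j-1) (i-1), (1 - wt (ℓ + 1) * (1 - γ' ℓ + η ℓ * γ' ℓ)))^2) = 0 := by
    intro h
    have hterm := (Finset.sum_eq_zero_iff_of_nonneg (fun j hj => by positivity)).mp h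
    refine Finset.sum_eq_zero fun j hj => ?_
    obtain ⟨hj1, hj2⟩ := Finset.mem_Icc.mp hj
    have ht := hterm j hj
    have hPpos : (0:ℝ) < ∏ ℓ ∈ Finset.Ioc (j-1) (i-1),
        (1 - wt (ℓ + 1) * (1 - γ ℓ + η ℓ * γ ℓ)) := by
      refine Finset.prod_pos fun ℓ hℓ => ?_
      obtain ⟨hℓ1, hℓ2⟩ := Finset.mem_Ioc.mp hℓ
      exact hfac γ hγ ℓ (by omega)
    have hw0 : (wt j)^2 = 0 := by
      rcases mul_eq_zero.mp ht with h' | h'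
      · exact h'
      · exact absurd h' (by positivity)
    rw [hw0, zero_mul]
  -- conclude
  have hrw : ∀ (δ : ℕ → ℝ), phiSpeed wt δ η i = 1 /
      (((varphi wt δ η (i-1))^2 * ∑ j ∈ Finset.Icc 1 i, (wt j)^2 / (varphi wt δ η (j-1))^2) / 2) := by
    intro δ; rw [phiSpeed]; ring_nf
  rw [hrw γ, hrw γ', key γ hγ, key γ' hγ']
  rcases eq_or_lt_of_le hTnn with h0 | h0
  · rw [← h0, hzero h0.symm]
  · exact one_div_le_one_div_of_le (by linarith) (by linarith [hsum])
end

section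
/- The convergence-speed metric φ_i is non-decreasing in each review-selection accuracy: if η and η′ are sequences in [0,1] with η_j ≤ η′_j for all j ≤ i (and all weights w̃_ℓ ∈ [0,1) for ℓ ≥ 2 and herding strengths γ_ℓ ∈ [0,1] fixed), then φ_i(w, η, γ) ≤ φ_i(w, η′, γ). -/
section aux

variable (wt γ : ℕ → ℝ)

/-- the factor appearing in `varphi` -/
noncomputable def fFac (η : ℕ → ℝ) (ℓ : ℕ) : ℝ :=
  1 - wt (ℓ + 1) * (1 - γ ℓ + η ℓ * γ ℓ)

lemma fFac_pos (hwt : ∀ ℓ, 2 ≤ ℓ → wt ℓ ∈ Set.Ico (0 : ℝ) 1)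
    (hγ : ∀ j, γ j ∈ Set.Icc (0 : ℝ) 1)
    (η : ℕ → ℝ) (hη : ∀ j, η j ∈ Set.Icc (0 : ℝ) 1)
    {ℓ : ℕ} (hℓ : 1 ≤ ℓ) : 0 < fFac wt γ η ℓ := by
  obtain ⟨hw0, hw1⟩ := hwt (ℓ + 1) (by omega)
  obtain ⟨hg0, hg1⟩ := hγ ℓ
  obtain ⟨he0, he1⟩ := hη ℓ
  have hm0 : 0 ≤ 1 - γ ℓ + η ℓ * γ ℓ := by nlinarith
  have hm1 : 1 - γ ℓ + η ℓ * γ ℓ ≤ 1 := by nlinarith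
  have : wt (ℓ + 1) * (1 - γ ℓ + η ℓ * γ ℓ) ≤ wt (ℓ + 1) := by nlinarith
  unfold fFac; linarith

lemma fFac_anti (hwt : ∀ ℓ, 2 ≤ ℓ → wt ℓ ∈ Set.Ico (0 : ℝ) 1)
    (hγ : ∀ j, γ j ∈ Set.Icc (0 : ℝ) 1)
    {η η' : ℕ → ℝ} {ℓ : ℕ} (hℓ : 1 ≤ ℓ) (h : η ℓ ≤ η' ℓ) :
    fFac wt γ η' ℓ ≤ fFac wt γ η ℓ := by
  obtain ⟨hw0, _⟩ := hwt (ℓ + 1) (by omega)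
  obtain ⟨hg0, _⟩ := hγ ℓ
  unfold fFac
  nlinarith [mul_nonneg hw0 (mul_nonneg hg0 (sub_nonneg.mpr h))]

lemma varphi_eq (η : ℕ → ℝ) (j : ℕ) :
    varphi wt γ η j = ∏ ℓ ∈ Finset.Ioc 0 j, fFac wt γ η ℓ := by
  rw [varphi, ← Finset.Icc_add_one_left_eq_Ioc]; rfl

lemma varphi_pos (hwt : ∀ ℓ, 2 ≤ ℓ → wt ℓ ∈ Set.Ico (0 : ℝ) 1)
    (hγ : ∀ j, γ j ∈ Set.Icc (0 : ℝ) 1)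
    (η : ℕ → ℝ) (hη : ∀ j, η j ∈ Set.Icc (0 : ℝ) 1) (j : ℕ) :
    0 < varphi wt γ η j := by
  rw [varphi_eq]
  exact Finset.prod_pos fun ℓ hℓ =>
    fFac_pos wt γ hwt hγ η hη (Finset.mem_Ioc.mp hℓ).1

/-- rewrite the denominator as a sum of manifestly monotone terms -/
lemma denom_eq (hwt : ∀ ℓ, 2 ≤ ℓ → wt ℓ ∈ Set.Ico (0 : ℝ) 1)
    (hγ : ∀ j, γ j ∈ Set.Icc (0 : ℝ) 1)
    (η : ℕ → ℝ) (hη : ∀ j, η j ∈ Set.Icc (0 : ℝ) 1) (i : ℕ) :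
    (varphi wt γ η (i - 1)) ^ 2 / 2 *
      ∑ j ∈ Finset.Icc 1 i, (wt j) ^ 2 / (varphi wt γ η (j - 1)) ^ 2
    = ∑ j ∈ Finset.Icc 1 i, (wt j) ^ 2 / 2 *
        (∏ ℓ ∈ Finset.Ioc (j - 1) (i - 1), fFac wt γ η ℓ) ^ 2 := by
  rw [Finset.mul_sum]
  refine Finset.sum_congr rfl fun j hj => ?_
  obtain ⟨hj1, hji⟩ := Finset.mem_Icc.mp hj
  have hsplit : varphi wt γ η (i - 1)
      = varphi wt γ η (j - 1) * ∏ ℓ ∈ Finset.Ioc (j - 1) (i - 1), fFac wt γ η ℓ := by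
    rw [varphi_eq, varphi_eq]
    exact (Finset.prod_Ioc_consecutive _ (Nat.zero_le _)
      (Nat.sub_le_sub_right hji 1)).symm
  have hne : varphi wt γ η (j - 1) ≠ 0 :=
    (varphi_pos wt γ hwt hγ η hη (j - 1)).ne'
  rw [hsplit]
  field_simp

end aux

/-- the convergence-speed metric `φ_i` is non-decreasing in each
review-selection accuracy `η_j`, `j ≤ i`. -/
theorem stmt_5 (wt γ η η' : ℕ → ℝ) (i : ℕ) (hi : 1 ≤ i)
    (hwt : ∀ ℓ, 2 ≤ ℓ → wt ℓ ∈ Set.Ico (0 : ℝ) 1)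
    (hγ : ∀ j, γ j ∈ Set.Icc (0 : ℝ) 1)
    (hη : ∀ j, η j ∈ Set.Icc (0 : ℝ) 1)
    (hη' : ∀ j, η' j ∈ Set.Icc (0 : ℝ) 1)
    (hle : ∀ j ≤ i, η j ≤ η' j) :
    phiSpeed wt γ η i ≤ phiSpeed wt γ η' i := by
  have hD := denom_eq wt γ hwt hγ η hη i
  have hD' := denom_eq wt γ hwt hγ η' hη' i
  set A := (varphi wt γ η (i - 1)) ^ 2 / 2 *
      ∑ j ∈ Finset.Icc 1 i, (wt j) ^ 2 / (varphi wt γ η (j - 1)) ^ 2 with hA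
  set A' := (varphi wt γ η' (i - 1)) ^ 2 / 2 *
      ∑ j ∈ Finset.Icc 1 i, (wt j) ^ 2 / (varphi wt γ η' (j - 1)) ^ 2 with hA'
  have hterm_nonneg : ∀ (η₀ : ℕ → ℝ), ∀ j ∈ Finset.Icc 1 i, (0:ℝ) ≤ (wt j) ^ 2 / 2 *
      (∏ ℓ ∈ Finset.Ioc (j - 1) (i - 1), fFac wt γ η₀ ℓ) ^ 2 := fun η₀ j _ => by
    positivity
  have hAle : A' ≤ A := by
    rw [hD, hD']
    refine Finset.sum_le_sum fun j hj => ?_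
    obtain ⟨hj1, hji⟩ := Finset.mem_Icc.mp hj
    have hprod : (0:ℝ) ≤ ∏ ℓ ∈ Finset.Ioc (j - 1) (i - 1), fFac wt γ η' ℓ := by
      refine Finset.prod_nonneg fun ℓ hℓ => ?_
      obtain ⟨h1, _⟩ := Finset.mem_Ioc.mp hℓ
      exact (fFac_pos wt γ hwt hγ η' hη' (by omega)).le
    have hple : (∏ ℓ ∈ Finset.Ioc (j - 1) (i - 1), fFac wt γ η' ℓ)
        ≤ ∏ ℓ ∈ Finset.Ioc (j - 1) (i - 1), fFac wt γ η ℓ := by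
      refine Finset.prod_le_prod ?_ ?_
      · intro ℓ hℓ
        obtain ⟨h1, _⟩ := Finset.mem_Ioc.mp hℓ
        exact (fFac_pos wt γ hwt hγ η' hη' (by omega)).le
      · intro ℓ hℓ
        obtain ⟨h1, h2⟩ := Finset.mem_Ioc.mp hℓ
        exact fFac_anti wt γ hwt hγ (by omega) (hle ℓ (by omega))
    have : (∏ ℓ ∈ Finset.Ioc (j - 1) (i - 1), fFac wt γ η' ℓ) ^ 2
        ≤ (∏ ℓ ∈ Finset.Ioc (j - 1) (i - 1), fFac wt γ η ℓ) ^ 2 :=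
      pow_le_pow_left₀ hprod hple 2
    have hw2 : (0:ℝ) ≤ (wt j) ^ 2 / 2 := by positivity
    exact mul_le_mul_of_nonneg_left this hw2
  have hA'nonneg : (0:ℝ) ≤ A' := by
    rw [hD']; exact Finset.sum_nonneg (hterm_nonneg η')
  rcases eq_or_lt_of_le hA'nonneg with h0 | hA'pos
  · -- A' = 0 : every wt j = 0 on Icc 1 i, hence A = 0 as well
    have hzero : ∀ j ∈ Finset.Icc 1 i, (wt j) ^ 2 / 2 *
        (∏ ℓ ∈ Finset.Ioc (j - 1) (i - 1), fFac wt γ η' ℓ) ^ 2 = 0 := by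
      rw [hD'] at h0
      exact (Finset.sum_eq_zero_iff_of_nonneg (hterm_nonneg η')).mp h0.symm
    have hwzero : ∀ j ∈ Finset.Icc 1 i, wt j = 0 := by
      intro j hj
      have h := hzero j hj
      have hppos : (0:ℝ) < ∏ ℓ ∈ Finset.Ioc (j - 1) (i - 1), fFac wt γ η' ℓ := by
        refine Finset.prod_pos fun ℓ hℓ => ?_
        obtain ⟨h1, _⟩ := Finset.mem_Ioc.mp hℓ
        exact fFac_pos wt γ hwt hγ η' hη' (by omega)
      have : (wt j) ^ 2 / 2 = 0 := by
        rcases mul_eq_zero.mp h with h' | h'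
        · exact h'
        · exact absurd h' (by positivity)
      nlinarith [sq_nonneg (wt j)]
    have hA0 : A = 0 := by
      rw [hD]
      exact Finset.sum_eq_zero fun j hj => by rw [hwzero j hj]; ring
    simp [phiSpeed, ← hA, ← hA', hA0, ← h0]
  · unfold phiSpeed
    rw [← hA, ← hA']
    exact one_div_le_one_div_of_le hA'pos hAle
end
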